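/- arXiv:1503.01796 — 2 statements merged into one kernel-verified Lean document; each statement's English description precedes it below -/
import Mathlib

section
/- For every natural number k, 3·a₁(2^k − 1) = 2^{k+2} − (−1)^k (as integers). -/
open Polynomial

/-- `a₁ n` : number of nonzero coefficients of `(1+x+x²)ⁿ` over `𝔽₂`. -/
noncomputable def a1 (n : ℕ) : ℕ :=
  (((1 + X + X ^ 2 : (ZMod 2)[X]) ^ n).support).card

/-- `a₂ n` : number of nonzero coefficients of `(1+x)(1+x+x²)ⁿ` over `𝔽₂`. -/
noncomputable def a2 (n : ℕ) : ℕ :=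
  (((1 + X) * (1 + X + X ^ 2 : (ZMod 2)[X]) ^ n).support).card

private lemma expand_eq_sq (f : (ZMod 2)[X]) : expand (ZMod 2) 2 f = f ^ 2 := by
  have h := map_frobenius_expand 2 f
  rwa [show frobenius (ZMod 2) 2 = RingHom.id _ by ext x; revert x; decide, map_id] at h

private lemma support_expand2 (f : (ZMod 2)[X]) :
    (expand (ZMod 2) 2 f).support = f.support.image (2 * ·) := by
  ext n
  simp only [mem_support_iff, coeff_expand two_pos, Finset.mem_image, mem_support_iff]
  constructor
  · intro h
    split_ifs at h with hd
    · exact ⟨n / 2, h, Nat.mul_div_cancel' hd⟩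
    · exact absurd rfl h
  · rintro ⟨m, hm, rfl⟩
    rw [if_pos ⟨m, rfl⟩, Nat.mul_div_cancel_left _ two_pos]
    exact hm

private lemma support_mul_X_pow' (g : (ZMod 2)[X]) (d : ℕ) :
    (g * X ^ d).support = g.support.image (· + d) := by
  ext n
  simp only [mem_support_iff, coeff_mul_X_pow', Finset.mem_image, mem_support_iff]
  constructor
  · intro h
    split_ifs at h with hd
    · exact ⟨n - d, h, Nat.sub_add_cancel hd⟩
    · exact absurd rfl h
  · rintro ⟨m, hm, rfl⟩
    rw [if_pos (Nat.le_add_left d m), Nat.add_sub_cancel]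
    exact hm

private lemma support_add_disjoint (f g : (ZMod 2)[X])
    (h : Disjoint f.support g.support) :
    (f + g).support = f.support ∪ g.support := by
  ext n
  simp only [Finset.mem_union, mem_support_iff, coeff_add]
  constructor
  · intro h'
    by_contra hc
    push_neg at hc
    simp [hc.1, hc.2] at h'
  · rintro (h' | h')
    · have hg : g.coeff n = 0 := by
        by_contra hg
        exact (Finset.disjoint_left.mp h (mem_support_iff.mpr h')) (mem_support_iff.mpr hg)
      simpa [hg] using h'
    · have hf : f.coeff n = 0 := by
        by_contra hf
        exact (Finset.disjoint_left.mp h (mem_support_iff.mpr hf)) (mem_support_iff.mpr h')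
      simpa [hf] using h'

private lemma two_eq_zero : (2 : (ZMod 2)[X]) = 0 := by
  have := CharP.cast_eq_zero ((ZMod 2)[X]) 2
  exact_mod_cast this

private lemma card_image_double (s : Finset ℕ) : (s.image (2 * ·)).card = s.card :=
  Finset.card_image_of_injective _ (fun a b h => by omega)

private lemma card_image_add (s : Finset ℕ) (d : ℕ) : (s.image (· + d)).card = s.card :=
  Finset.card_image_of_injective _ (fun a b h => by omega)

private lemma disj_even_odd (s t : Finset ℕ) (d : ℕ) (hd : d % 2 = 1) :
    Disjoint (s.image (2 * ·)) ((t.image (2 * ·)).image (· + d)) := by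
  rw [Finset.disjoint_left]
  rintro n hn hn'
  simp only [Finset.mem_image] at hn hn'
  obtain ⟨a, -, ha⟩ := hn
  obtain ⟨b, hb, hbn⟩ := hn'
  obtain ⟨c, -, hc⟩ := hb
  omega

private lemma a1_rec (m : ℕ) : a1 (2 * m + 1) = a2 m + a1 m := by
  set p : (ZMod 2)[X] := 1 + X + X ^ 2 with hp
  set r : (ZMod 2)[X] := p ^ m with hr
  have hq : p ^ (2 * m + 1) =
      expand (ZMod 2) 2 ((1 + X) * r) + expand (ZMod 2) 2 r * X ^ 1 := by
    rw [expand_eq_sq, expand_eq_sq, pow_succ, pow_mul', ← hr, hp]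
    linear_combination (-(X * r ^ 2)) * two_eq_zero
  unfold a1
  rw [← hp, hq, support_add_disjoint _ _ (by
      rw [support_expand2, support_mul_X_pow', support_expand2]
      exact disj_even_odd _ _ 1 rfl),
    Finset.card_union_of_disjoint (by
      rw [support_expand2, support_mul_X_pow', support_expand2]
      exact disj_even_odd _ _ 1 rfl),
    support_expand2, support_mul_X_pow', support_expand2,
    card_image_double, card_image_add, card_image_double]
  rfl

private lemma a2_rec (m : ℕ) : a2 (2 * m + 1) = a1 m + a1 m := by
  set p : (ZMod 2)[X] := 1 + X + X ^ 2 with hp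
  set r : (ZMod 2)[X] := p ^ m with hr
  have hq : (1 + X) * p ^ (2 * m + 1) =
      expand (ZMod 2) 2 r + expand (ZMod 2) 2 r * X ^ 3 := by
    rw [expand_eq_sq, pow_succ, pow_mul', ← hr, hp]
    linear_combination ((X + X ^ 2) * r ^ 2) * two_eq_zero
  unfold a2
  rw [← hp, hq, support_add_disjoint _ _ (by
      rw [support_expand2, support_mul_X_pow', support_expand2]
      exact disj_even_odd _ _ 3 rfl),
    Finset.card_union_of_disjoint (by
      rw [support_expand2, support_mul_X_pow', support_expand2]
      exact disj_even_odd _ _ 3 rfl),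
    support_expand2, support_mul_X_pow', support_expand2,
    card_image_double, card_image_add, card_image_double]
  rfl

private lemma a1_zero : a1 0 = 1 := by
  have : ((1 : (ZMod 2)[X])).support = {0} := by
    ext n
    simp only [mem_support_iff, coeff_one, Finset.mem_singleton]
    rcases n with _ | n <;> simp
  unfold a1
  rw [pow_zero, this]
  rfl

private lemma a2_zero : a2 0 = 2 := by
  have : ((1 + X : (ZMod 2)[X])).support = {0, 1} := by
    ext n
    simp only [mem_support_iff, coeff_add, coeff_one, coeff_X, Finset.mem_insert,
      Finset.mem_singleton]
    rcases n with _ | _ | n <;> simp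
  unfold a2
  rw [pow_zero, mul_one, this]
  rfl

private lemma combined (k : ℕ) :
    (3 : ℤ) * (a1 (2 ^ k - 1) : ℤ) = 2 ^ (k + 2) - (-1) ^ k ∧
    (3 : ℤ) * (a2 (2 ^ k - 1) : ℤ) = 2 ^ (k + 2) + 2 * (-1) ^ k := by
  induction k with
  | zero => norm_num [a1_zero, a2_zero]
  | succ k ih =>
    have hstep : 2 ^ (k + 1) - 1 = 2 * (2 ^ k - 1) + 1 := by
      have : 1 ≤ 2 ^ k := Nat.one_le_two_pow
      omega
    rw [hstep, a1_rec, a2_rec]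
    push_cast
    have h1 := ih.1
    have h2 := ih.2
    have hpow : ((-1 : ℤ)) ^ (k + 1) = -(-1) ^ k := by ring
    have hpow2 : ((2 : ℤ)) ^ (k + 1 + 2) = 2 * 2 ^ (k + 2) := by ring
    constructor <;> rw [hpow, hpow2] <;> linarith

theorem b1_closed_form (k : ℕ) :
    (3 : ℤ) * (a1 (2 ^ k - 1) : ℤ) = 2 ^ (k + 2) - (-1) ^ k := by
  exact (combined k).1
end

section
/- The sequence b₁ satisfies the second-order linear recurrence b₁(k+2) = b₁(k+1) + 2·b₁(k) for all natural numbers k, i.e. a₁(2^{k+2} − 1) = a₁(2^{k+1} − 1) + 2·a₁(2^k − 1). -/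
open Polynomial Finset

lemma sq_expand (q : (ZMod 2)[X]) : q ^ 2 = expand (ZMod 2) 2 q := by
  have h := Polynomial.map_frobenius_expand 2 q
  rwa [ZMod.frobenius_zmod, Polynomial.map_id, eq_comm] at h

lemma key_card (q r : (ZMod 2)[X]) :
    (expand (ZMod 2) 2 q + X * expand (ZMod 2) 2 r).support.card
      = q.support.card + r.support.card := by
  have hsupp : (expand (ZMod 2) 2 q + X * expand (ZMod 2) 2 r).support
      = q.support.image (fun n => 2 * n) ∪ r.support.image (fun n => 2 * n + 1) := by
    ext n
    simp only [mem_support_iff, coeff_add, mem_union, mem_image]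
    rcases Nat.even_or_odd n with ⟨m, hm⟩ | ⟨m, hm⟩
    · subst hm
      have h1 : (expand (ZMod 2) 2 q).coeff (m + m) = q.coeff m := by
        have := Polynomial.coeff_expand_mul' (p := 2) (R := ZMod 2) two_pos q m
        simpa [two_mul] using this
      have h2 : (X * expand (ZMod 2) 2 r).coeff (m + m) = 0 := by
        rcases Nat.eq_zero_or_pos m with rfl | hm
        · simp
        · have : m + m = (m + m - 1) + 1 := by omega
          rw [this, Polynomial.coeff_X_mul, Polynomial.coeff_expand two_pos]
          rw [if_neg (by omega)]
      rw [h1, h2, add_zero]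
      constructor
      · intro h; exact Or.inl ⟨m, h, by omega⟩
      · rintro (⟨a, ha, hae⟩ | ⟨a, ha, hae⟩)
        · have : a = m := by omega
          subst this; exact ha
        · omega
    · subst hm
      have h1 : (expand (ZMod 2) 2 q).coeff (2 * m + 1) = 0 := by
        rw [Polynomial.coeff_expand two_pos, if_neg (by omega)]
      have h2 : (X * expand (ZMod 2) 2 r).coeff (2 * m + 1) = r.coeff m := by
        rw [Polynomial.coeff_X_mul, Polynomial.coeff_expand_mul' two_pos]
      rw [h1, h2, zero_add]
      constructor
      · intro h; exact Or.inr ⟨m, h, rfl⟩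
      · rintro (⟨a, ha, hae⟩ | ⟨a, ha, hae⟩)
        · omega
        · have : a = m := by omega
          subst this; exact ha
  have hdisj : Disjoint (q.support.image (fun n => 2 * n))
      (r.support.image (fun n => 2 * n + 1)) := by
    rw [Finset.disjoint_left]
    intro n hn hn'
    simp only [Finset.mem_image] at hn hn'
    obtain ⟨a, _, ha⟩ := hn
    obtain ⟨b, _, hb⟩ := hn'
    omega
  rw [hsupp, Finset.card_union_of_disjoint hdisj,
    Finset.card_image_of_injective _ (fun a b h => by omega),
    Finset.card_image_of_injective _ (fun a b h => by omega)]

lemma card_X_mul (p : (ZMod 2)[X]) : (X * p).support.card = p.support.card := by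
  have h : (X * p).support = p.support.image (fun n => n + 1) := by
    ext n
    simp only [mem_support_iff, Finset.mem_image]
    cases n with
    | zero =>
      simp [Polynomial.mul_coeff_zero]
    | succ m =>
      rw [Polynomial.coeff_X_mul]
      constructor
      · intro h; exact ⟨m, h, rfl⟩
      · rintro ⟨a, ha, hae⟩
        have : a = m := by omega
        subst this; exact ha
  rw [h, Finset.card_image_of_injective _ (fun a b h => by omega)]

lemma a1_step (n : ℕ) : a1 (2 * n + 1) = a1 n + a2 n := by
  have hpow : (1 + X + X ^ 2 : (ZMod 2)[X]) ^ (2 * n + 1)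
      = expand (ZMod 2) 2 ((1 + X) * (1 + X + X ^ 2) ^ n)
        + X * expand (ZMod 2) 2 ((1 + X + X ^ 2) ^ n) := by
    rw [pow_succ, mul_comm 2 n, pow_mul, sq_expand]
    simp only [map_mul, map_add, map_one, expand_X]
    ring
  rw [a1, hpow, key_card, a1, a2, add_comm]

lemma a2_step (n : ℕ) : a2 (2 * n + 1) = 2 * a1 n := by
  have h2 : (2 : (ZMod 2)[X]) = 0 := by
    simpa using CharP.cast_eq_zero ((ZMod 2)[X]) 2
  have hpow : (1 + X) * (1 + X + X ^ 2 : (ZMod 2)[X]) ^ (2 * n + 1)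
      = expand (ZMod 2) 2 ((1 + X + X ^ 2) ^ n)
        + X * expand (ZMod 2) 2 (X * (1 + X + X ^ 2) ^ n) := by
    rw [pow_succ, mul_comm 2 n, pow_mul, sq_expand]
    simp only [map_mul, map_add, map_one, expand_X]
    linear_combination (X + X ^ 2 : (ZMod 2)[X]) *
      (expand (ZMod 2) 2 ((1 + X + X ^ 2) ^ n)) * h2
  rw [a2, hpow, key_card, card_X_mul, a1, two_mul]

theorem b1_recurrence (k : ℕ) :
    a1 (2 ^ (k + 2) - 1) = a1 (2 ^ (k + 1) - 1) + 2 * a1 (2 ^ k - 1) := by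
  have p1 : 1 ≤ 2 ^ (k + 1) := Nat.one_le_two_pow
  have p0 : 1 ≤ 2 ^ k := Nat.one_le_two_pow
  have e1 : 2 ^ (k + 2) - 1 = 2 * (2 ^ (k + 1) - 1) + 1 := by
    have h : 2 ^ (k + 2) = 2 * 2 ^ (k + 1) := by ring
    omega
  have e2 : 2 ^ (k + 1) - 1 = 2 * (2 ^ k - 1) + 1 := by
    have h : 2 ^ (k + 1) = 2 * 2 ^ k := by ring
    omega
  rw [e1, a1_step, e2, a2_step]
end
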